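/- Let n, m ≥ 0 be natural numbers, L one of the logics tΣ_n[m] or tΠ_n[m], τ a finite relational vocabulary, and τ̱ = τ ∪ {P} for a new unary predicate P. Then for every L formula φ(x̄₁,x̄₂) over τ̱, there exists an L reduction sequence D(x̄₁,x̄₂) over τ (i.e., consisting of formulae of the same class tΣ_n[m], resp. tΠ_n[m]) that is a Feferman–Vaught decomposition of φ(x̄₁,x̄₂) over the annotated disjoint union operation. -/

import Mathlib

namespace FV

open Cardinal

/-- A (finite) relational vocabulary: a type of relation symbols with arities. -/
structure Vocab : Type 1 where
  Rel : Type
  arity : Rel → ℕ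

/-- A structure over a relational vocabulary. -/
structure Struc (τ : Vocab) : Type 1 where
  carrier : Type
  rel : ∀ R : τ.Rel, (Fin (τ.arity R) → carrier) → Prop

/-- Infinitary formulae in negation normal form over a relational vocabulary,
with free variables among `Fin n`. -/
inductive Formula (τ : Vocab) : ℕ → Type 1 where
  | tru {n : ℕ} : Formula τ n
  | fls {n : ℕ} : Formula τ n
  | rel {n : ℕ} (R : τ.Rel) (ts : Fin (τ.arity R) → Fin n) : Formula τ n
  | nrel {n : ℕ} (R : τ.Rel) (ts : Fin (τ.arity R) → Fin n) : Formula τ n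
  | eq {n : ℕ} (i j : Fin n) : Formula τ n
  | neq {n : ℕ} (i j : Fin n) : Formula τ n
  | iAnd {n : ℕ} (I : Type) (f : I → Formula τ n) : Formula τ n
  | iOr {n : ℕ} (I : Type) (f : I → Formula τ n) : Formula τ n
  | ex {n : ℕ} (φ : Formula τ (n+1)) : Formula τ n
  | all {n : ℕ} (φ : Formula τ (n+1)) : Formula τ n

/-- Binary conjunction (a conjunction of arity 2). -/
def Formula.and {τ : Vocab} {n : ℕ} (φ ψ : Formula τ n) : Formula τ n :=
  Formula.iAnd Bool (fun b => if b then φ else ψ)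

/-- Binary disjunction (a disjunction of arity 2). -/
def Formula.or {τ : Vocab} {n : ℕ} (φ ψ : Formula τ n) : Formula τ n :=
  Formula.iOr Bool (fun b => if b then φ else ψ)

/-- Quantifier-free formulae (in NNF, with finite conjunctions/disjunctions). -/
inductive IsQF {τ : Vocab} : ∀ {n : ℕ}, Formula τ n → Prop where
  | tru {n : ℕ} : IsQF (Formula.tru (τ := τ) (n := n))
  | fls {n : ℕ} : IsQF (Formula.fls (τ := τ) (n := n))
  | rel {n : ℕ} (R : τ.Rel) (ts : Fin (τ.arity R) → Fin n) : IsQF (Formula.rel R ts)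
  | nrel {n : ℕ} (R : τ.Rel) (ts : Fin (τ.arity R) → Fin n) : IsQF (Formula.nrel R ts)
  | eq {n : ℕ} (i j : Fin n) : IsQF (Formula.eq (τ := τ) i j)
  | neq {n : ℕ} (i j : Fin n) : IsQF (Formula.neq (τ := τ) i j)
  | iAnd {n : ℕ} (I : Type) (hI : Finite I) (f : I → Formula τ n)
      (h : ∀ i, IsQF (f i)) : IsQF (Formula.iAnd I f)
  | iOr {n : ℕ} (I : Type) (hI : Finite I) (f : I → Formula τ n)
      (h : ∀ i, IsQF (f i)) : IsQF (Formula.iOr I f)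

/-- Satisfaction of a formula in a structure under an assignment. -/
def Sat {τ : Vocab} (A : Struc τ) : ∀ {n : ℕ}, Formula τ n → (Fin n → A.carrier) → Prop
  | _, .tru, _ => True
  | _, .fls, _ => False
  | _, .rel R ts, v => A.rel R (fun i => v (ts i))
  | _, .nrel R ts, v => ¬ A.rel R (fun i => v (ts i))
  | _, .eq i j, v => v i = v j
  | _, .neq i j, v => v i ≠ v j
  | _, .iAnd I f, v => ∀ i : I, Sat A (f i) v
  | _, .iOr I f, v => ∃ i : I, Sat A (f i) v
  | _, .ex φ, v => ∃ a, Sat A φ (Fin.snoc v a)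
  | _, .all φ, v => ∀ a, Sat A φ (Fin.snoc v a)

/-- The empty assignment. -/
def emptyA {α : Type} : Fin 0 → α := fun i => i.elim0

/-- The (quantifier) rank of a formula: the supremum of the number of quantifiers
on any root-to-leaf path of its parse tree. -/
noncomputable def rank {τ : Vocab} : ∀ {n : ℕ}, Formula τ n → Cardinal
  | _, .iAnd I f => ⨆ i : I, rank (f i)
  | _, .iOr I f => ⨆ i : I, rank (f i)
  | _, .ex φ => rank φ + 1
  | _, .all φ => rank φ + 1
  | _, _ => 0

/-- The size of a formula (number of nodes of its parse tree), as a cardinal. -/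
noncomputable def sizeC {τ : Vocab} : ∀ {n : ℕ}, Formula τ n → Cardinal
  | _, .iAnd I f => 1 + Cardinal.sum (fun i : I => sizeC (f i))
  | _, .iOr I f => 1 + Cardinal.sum (fun i : I => sizeC (f i))
  | _, .ex φ => 1 + sizeC φ
  | _, .all φ => 1 + sizeC φ
  | _, _ => 1

mutual
/-- The class tΣ_{κ,λ} of formulae. -/
inductive TSigma (τ : Vocab) (κ : Cardinal) : Ordinal → ∀ {n : ℕ}, Formula τ n → Prop where
  | qf {n : ℕ} {φ : Formula τ n} : IsQF φ → TSigma τ κ 0 φ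
  | conj {n : ℕ} {lam : Ordinal} (I : Type) (f : I → Formula τ n)
      (hI : Cardinal.mk I < κ) (lam' : I → Ordinal) (hlt : ∀ i, lam' i < lam)
      (h : ∀ i, TPi τ κ (lam' i) (f i)) : TSigma τ κ lam (Formula.iAnd I f)
  | ex {n : ℕ} {lam : Ordinal} {φ : Formula τ (n+1)} :
      TSigma τ κ lam φ → TSigma τ κ lam (Formula.ex φ)

/-- The class tΠ_{κ,λ} of formulae. -/
inductive TPi (τ : Vocab) (κ : Cardinal) : Ordinal → ∀ {n : ℕ}, Formula τ n → Prop where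
  | qf {n : ℕ} {φ : Formula τ n} : IsQF φ → TPi τ κ 0 φ
  | disj {n : ℕ} {lam : Ordinal} (I : Type) (f : I → Formula τ n)
      (hI : Cardinal.mk I < κ) (lam' : I → Ordinal) (hlt : ∀ i, lam' i < lam)
      (h : ∀ i, TSigma τ κ (lam' i) (f i)) : TPi τ κ lam (Formula.iOr I f)
  | all {n : ℕ} {lam : Ordinal} {φ : Formula τ (n+1)} :
      TPi τ κ lam φ → TPi τ κ lam (Formula.all φ)
end

/-- tΣ_{∞,λ}: union of tΣ_{κ,λ} over all infinite cardinals κ. -/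
def TSigmaInf (τ : Vocab) (lam : Ordinal) {n : ℕ} (φ : Formula τ n) : Prop :=
  ∃ κ : Cardinal, ℵ₀ ≤ κ ∧ TSigma τ κ lam φ

/-- tΠ_{∞,λ}: union of tΠ_{κ,λ} over all infinite cardinals κ. -/
def TPiInf (τ : Vocab) (lam : Ordinal) {n : ℕ} (φ : Formula τ n) : Prop :=
  ∃ κ : Cardinal, ℵ₀ ≤ κ ∧ TPi τ κ lam φ

/-- The λ-fold exponential `tower` function (taking suprema at limits). -/
noncomputable def towerC (κ : Cardinal) (l : Ordinal) : Cardinal :=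
  Ordinal.limitRecOn l κ (fun _ ih => (2 : Cardinal) ^ ih)
    (fun o _ ih => ⨆ i : {o' : Ordinal // o' < o}, ih i.1 i.2)

/-- The n-fold exponential `tower` function on naturals. -/
def towerN : ℕ → Cardinal → Cardinal
  | 0, k => k
  | n+1, k => (2 : Cardinal) ^ towerN n k

open Classical in
/-- ρ(κ,λ) = tower(λ,κ) if κ > ω, else ω. -/
noncomputable def rho (κ : Cardinal) (lam : Ordinal) : Cardinal :=
  if ℵ₀ < κ then towerC κ lam else ℵ₀

/-- ∞-propositional formulae over a set `V` of propositional variables. -/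
inductive PropForm (V : Type) : Type 1 where
  | var (v : V) : PropForm V
  | not (p : PropForm V) : PropForm V
  | iAnd (I : Type) (f : I → PropForm V) : PropForm V
  | iOr (I : Type) (f : I → PropForm V) : PropForm V

/-- Binary conjunction of propositional formulae. -/
def PropForm.and {V : Type} (p q : PropForm V) : PropForm V :=
  PropForm.iAnd Bool (fun b => if b then p else q)

/-- Binary disjunction of propositional formulae. -/
def PropForm.or {V : Type} (p q : PropForm V) : PropForm V :=
  PropForm.iOr Bool (fun b => if b then p else q)

/-- Evaluation of an ∞-propositional formula under an assignment. -/
def PropForm.eval {V : Type} (ζ : V → Bool) : PropForm V → Prop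
  | .var v => ζ v = true
  | .not p => ¬ PropForm.eval ζ p
  | .iAnd _ f => ∀ i, PropForm.eval ζ (f i)
  | .iOr _ f => ∃ i, PropForm.eval ζ (f i)

/-- Negation-free ∞-propositional formulae. -/
inductive PropForm.NegFree {V : Type} : PropForm V → Prop where
  | var (v : V) : PropForm.NegFree (.var v)
  | iAnd (I : Type) (f : I → PropForm V) (h : ∀ i, PropForm.NegFree (f i)) :
      PropForm.NegFree (.iAnd I f)
  | iOr (I : Type) (f : I → PropForm V) (h : ∀ i, PropForm.NegFree (f i)) :
      PropForm.NegFree (.iOr I f)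

/-- Finitary (ordinary) propositional formulae. -/
inductive PropForm.Finitary {V : Type} : PropForm V → Prop where
  | var (v : V) : PropForm.Finitary (.var v)
  | not (p : PropForm V) (h : PropForm.Finitary p) : PropForm.Finitary (.not p)
  | iAnd (I : Type) (hI : Finite I) (f : I → PropForm V)
      (h : ∀ i, PropForm.Finitary (f i)) : PropForm.Finitary (.iAnd I f)
  | iOr (I : Type) (hI : Finite I) (f : I → PropForm V)
      (h : ∀ i, PropForm.Finitary (f i)) : PropForm.Finitary (.iOr I f)

/-- Size of an ∞-propositional formula. -/
noncomputable def PropForm.size {V : Type} : PropForm V → Cardinal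
  | .var _ => 1
  | .not p => 1 + PropForm.size p
  | .iAnd I f => 1 + Cardinal.sum (fun i : I => PropForm.size (f i))
  | .iOr I f => 1 + Cardinal.sum (fun i : I => PropForm.size (f i))

/-- A reduction sequence `D(x̄₁, x̄₂) = (Δ₁(x̄₁), Δ₂(x̄₂), β)` over τ. -/
structure RedSeq (τ : Vocab) (r₁ r₂ : ℕ) : Type 1 where
  I : Type
  Δ₁ : I → Formula τ r₁
  Δ₂ : I → Formula τ r₂
  β : PropForm (I × Fin 2)

/-- `(A₁, A₂, ā₁, ā₂)` is a model of the reduction sequence `D`. -/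
def RedSeq.Models {τ : Vocab} {r₁ r₂ : ℕ} (D : RedSeq τ r₁ r₂) (A₁ A₂ : Struc τ)
    (a₁ : Fin r₁ → A₁.carrier) (a₂ : Fin r₂ → A₂.carrier) : Prop :=
  ∃ ζ : D.I × Fin 2 → Bool, D.β.eval ζ ∧
    (∀ i : D.I, (ζ (i, 0) = true ↔ Sat A₁ (D.Δ₁ i) a₁)) ∧
    (∀ i : D.I, (ζ (i, 1) = true ↔ Sat A₂ (D.Δ₂ i) a₂))

/-- Size of a reduction sequence. -/
noncomputable def RedSeq.size {τ : Vocab} {r₁ r₂ : ℕ} (D : RedSeq τ r₁ r₂) : Cardinal :=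
  Cardinal.sum (fun i : D.I => sizeC (D.Δ₁ i)) +
    Cardinal.sum (fun i : D.I => sizeC (D.Δ₂ i)) + D.β.size

/-- The vocabulary τ̱ = τ ∪ {P} for a new unary predicate P (represented by `none`). -/
def annotV (τ : Vocab) : Vocab where
  Rel := Option τ.Rel
  arity := fun R => match R with
    | none => 1
    | some S => τ.arity S

/-- The annotated disjoint union of two τ-structures: their disjoint union,
expanded by interpreting the new unary predicate P as the universe of the first. -/
def adu {τ : Vocab} (A₁ A₂ : Struc τ) : Struc (annotV τ) where
  carrier := A₁.carrier ⊕ A₂.carrier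
  rel := fun R => match R with
    | none => fun v => (v ⟨0, Nat.one_pos⟩).isLeft = true
    | some S => fun v =>
        (∃ w : Fin (τ.arity S) → A₁.carrier, A₁.rel S w ∧ v = fun i => Sum.inl (w i)) ∨
        (∃ w : Fin (τ.arity S) → A₂.carrier, A₂.rel S w ∧ v = fun i => Sum.inr (w i))

/-- `D` is a Feferman–Vaught decomposition of `φ(x̄₁,x̄₂)` over annotated disjoint union. -/
def FVDecompADU {τ : Vocab} {r₁ r₂ : ℕ} (φ : Formula (annotV τ) (r₁ + r₂))
    (D : RedSeq τ r₁ r₂) : Prop :=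
  ∀ (A₁ A₂ : Struc τ) (a₁ : Fin r₁ → A₁.carrier) (a₂ : Fin r₂ → A₂.carrier),
    Sat (adu A₁ A₂) φ (Fin.append (fun i => Sum.inl (a₁ i)) (fun i => Sum.inr (a₂ i)))
      ↔ D.Models A₁ A₂ a₁ a₂

/-- `D` is a Feferman–Vaught decomposition of the sentence `φ` over the binary operation `op`. -/
def FVDecompOp {τ : Vocab} (op : Struc τ → Struc τ → Struc τ) (φ : Formula τ 0)
    (D : RedSeq τ 0 0) : Prop :=
  ∀ A₁ A₂ : Struc τ, Sat (op A₁ A₂) φ emptyA ↔ D.Models A₁ A₂ emptyA emptyA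

/-- A quantifier-free scalar (σ,τ)-interpretation. -/
structure QFInterp (σ τ : Vocab) : Type 1 where
  xiU : Formula σ 1
  xiR : ∀ R : τ.Rel, Formula σ (τ.arity R)
  hU : IsQF xiU
  hR : ∀ R : τ.Rel, IsQF (xiR R)

/-- The τ-structure interpreted in a σ-structure by a quantifier-free interpretation. -/
def QFInterp.app {σ τ : Vocab} (Ξ : QFInterp σ τ) (A : Struc σ) : Struc τ where
  carrier := { a : A.carrier // Sat A Ξ.xiU (fun _ => a) }
  rel := fun R v => Sat A (Ξ.xiR R) (fun i => (v i).1)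

/-- The quantifier-free sum-like binary operation defined by a (τ̱,τ)-interpretation. -/
def sumLike {τ : Vocab} (Ξ : QFInterp (annotV τ) τ) (A₁ A₂ : Struc τ) : Struc τ :=
  Ξ.app (adu A₁ A₂)


/-- Relabelling of free variables. -/
def relabel {τ : Vocab} : ∀ {m n : ℕ}, (Fin m → Fin n) → Formula τ m → Formula τ n
  | _, _, _, .tru => .tru
  | _, _, _, .fls => .fls
  | _, _, g, .rel R ts => .rel R (fun i => g (ts i))
  | _, _, g, .nrel R ts => .nrel R (fun i => g (ts i))
  | _, _, g, .eq i j => .eq (g i) (g j)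
  | _, _, g, .neq i j => .neq (g i) (g j)
  | _, _, g, .iAnd I f => .iAnd I (fun i => relabel g (f i))
  | _, _, g, .iOr I f => .iOr I (fun i => relabel g (f i))
  | _, _, g, .ex φ => .ex (relabel (Fin.snoc (fun i => Fin.castSucc (g i)) (Fin.last _)) φ)
  | _, _, g, .all φ => .all (relabel (Fin.snoc (fun i => Fin.castSucc (g i)) (Fin.last _)) φ)

/-- Negation, in negation normal form. -/
def nnfNeg {τ : Vocab} : ∀ {n : ℕ}, Formula τ n → Formula τ n
  | _, .tru => .fls
  | _, .fls => .tru
  | _, .rel R ts => .nrel R ts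
  | _, .nrel R ts => .rel R ts
  | _, .eq i j => .neq i j
  | _, .neq i j => .eq i j
  | _, .iAnd I f => .iOr I (fun i => nnfNeg (f i))
  | _, .iOr I f => .iAnd I (fun i => nnfNeg (f i))
  | _, .ex φ => .all (nnfNeg φ)
  | _, .all φ => .ex (nnfNeg φ)

/-- Finite conjunction of a tuple of formulae. -/
def finAnd {τ : Vocab} {n : ℕ} : ∀ {r : ℕ}, (Fin r → Formula τ n) → Formula τ n
  | 0, _ => .tru
  | r+1, f => (finAnd (fun i => f (Fin.castSucc i))).and (f (Fin.last r))

/-- A block of `k` existential quantifiers. -/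
def exBlock {τ : Vocab} : ∀ (k : ℕ) {r : ℕ}, Formula τ (r + k) → Formula τ r
  | 0, _, φ => φ
  | k+1, _, φ => exBlock k (Formula.ex φ)

/-- A block of `k` universal quantifiers. -/
def allBlock {τ : Vocab} : ∀ (k : ℕ) {r : ℕ}, Formula τ (r + k) → Formula τ r
  | 0, _, φ => φ
  | k+1, _, φ => allBlock k (Formula.all φ)

mutual
/-- The class tΣ_{(n,k)}: tΣ_n formulae all of whose quantifier blocks have length exactly k. -/
inductive SigNK (τ : Vocab) (k : ℕ) : ℕ → ∀ {r : ℕ}, Formula τ r → Prop where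
  | qf {r : ℕ} {φ : Formula τ r} : IsQF φ → SigNK τ k 0 φ
  | blk {r n : ℕ} (hn : 0 < n) (I : Type) (hI : Finite I) (f : I → Formula τ (r + k))
      (n' : I → ℕ) (hlt : ∀ i, n' i < n) (h : ∀ i, PiNK τ k (n' i) (f i)) :
      SigNK τ k n (exBlock k (Formula.iAnd I f))
/-- The class tΠ_{(n,k)}: tΠ_n formulae all of whose quantifier blocks have length exactly k. -/
inductive PiNK (τ : Vocab) (k : ℕ) : ℕ → ∀ {r : ℕ}, Formula τ r → Prop where
  | qf {r : ℕ} {φ : Formula τ r} : IsQF φ → PiNK τ k 0 φ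
  | blk {r n : ℕ} (hn : 0 < n) (I : Type) (hI : Finite I) (f : I → Formula τ (r + k))
      (n' : I → ℕ) (hlt : ∀ i, n' i < n) (h : ∀ i, SigNK τ k (n' i) (f i)) :
      PiNK τ k n (allBlock k (Formula.iOr I f))
end

/-- Partial isomorphism condition on a pair of tuples. -/
def PIso {τ : Vocab} (A₁ A₂ : Struc τ) (r : ℕ)
    (a₁ : Fin r → A₁.carrier) (a₂ : Fin r → A₂.carrier) : Prop :=
  (∀ i j : Fin r, a₁ i = a₁ j ↔ a₂ i = a₂ j) ∧
  (∀ (R : τ.Rel) (ts : Fin (τ.arity R) → Fin r),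
      A₁.rel R (fun l => a₁ (ts l)) ↔ A₂.rel R (fun l => a₂ (ts l)))

/-- The Duplicator has a winning strategy in the (n,k)-prefix game on the ordered pair
((A₁,ā₁),(A₂,ā₂)): in odd rounds the Spoiler picks a k-tuple in A₁ (and the Duplicator
answers in A₂), in even rounds the roles of the structures are swapped; the Duplicator wins
a play if the chosen tuples collectively form a partial isomorphism. -/
def DWinPrefix {τ : Vocab} (k : ℕ) : ℕ → (A₁ A₂ : Struc τ) → (r : ℕ) →
    (Fin r → A₁.carrier) → (Fin r → A₂.carrier) → Prop
  | 0, A₁, A₂, r, a₁, a₂ => PIso A₁ A₂ r a₁ a₂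
  | n+1, A₁, A₂, r, a₁, a₂ =>
      ∀ b₁ : Fin k → A₁.carrier, ∃ b₂ : Fin k → A₂.carrier,
        DWinPrefix k n A₂ A₁ (r + k) (Fin.append a₂ b₂) (Fin.append a₁ b₁)

/-- The Duplicator has a winning strategy in the (n,k)-tree-prefix game on the set
{(A₁,ā₁),(A₂,ā₂)}: in the first round the Spoiler picks a k-tuple in either structure, and
thereafter in the structure in which the Duplicator chose in the previous round. -/
def DWinTree {τ : Vocab} (k : ℕ) : ℕ → (A₁ A₂ : Struc τ) → (r : ℕ) →
    (Fin r → A₁.carrier) → (Fin r → A₂.carrier) → Prop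
  | 0, A₁, A₂, r, a₁, a₂ => PIso A₁ A₂ r a₁ a₂
  | n+1, A₁, A₂, r, a₁, a₂ =>
      (∀ b₁ : Fin k → A₁.carrier, ∃ b₂ : Fin k → A₂.carrier,
        DWinPrefix k n A₂ A₁ (r + k) (Fin.append a₂ b₂) (Fin.append a₁ b₁)) ∧
      (∀ b₂ : Fin k → A₂.carrier, ∃ b₁ : Fin k → A₁.carrier,
        DWinPrefix k n A₁ A₂ (r + k) (Fin.append a₁ b₁) (Fin.append a₂ b₂))

/-- (A₁,ā₁) ⇛_{(n,k)} (A₂,ā₂) : every tΣ_{(n,k)} formula true of (A₁,ā₁) is true of (A₂,ā₂). -/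
def TransferNK {τ : Vocab} (n k : ℕ) (A₁ A₂ : Struc τ) (r : ℕ)
    (a₁ : Fin r → A₁.carrier) (a₂ : Fin r → A₂.carrier) : Prop :=
  ∀ φ : Formula τ r, SigNK τ k n φ → Sat A₁ φ a₁ → Sat A₂ φ a₂

/-- (A₁,ā₁) ≡_{(n,k)} (A₂,ā₂) : agreement on all tΣ_{(n,k)} formulae. -/
def EquivNK {τ : Vocab} (n k : ℕ) (A₁ A₂ : Struc τ) (r : ℕ)
    (a₁ : Fin r → A₁.carrier) (a₂ : Fin r → A₂.carrier) : Prop :=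
  ∀ φ : Formula τ r, SigNK τ k n φ → (Sat A₁ φ a₁ ↔ Sat A₂ φ a₂)

namespace QFInterp

variable {σ τ : Vocab}

/-- The universe formula ξ_U applied at variable `i`. -/
def uAt (Ξ : QFInterp σ τ) {n : ℕ} (i : Fin n) : Formula σ n :=
  relabel (fun _ : Fin 1 => i) Ξ.xiU

/-- The universe formula ξ_U applied at the last (just-quantified) variable. -/
def uLast (Ξ : QFInterp σ τ) {n : ℕ} : Formula σ (n+1) :=
  Ξ.uAt (Fin.last n)

/-- Close a pending quantifier-block guard. -/
def closeG {n : ℕ} : Option (Bool × Formula σ n) → Formula σ n → Formula σ n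
  | none, r => r
  | some (true, g), r => g.and r
  | some (false, g), r => g.or r

/-- Block-wise translation Ξ(φ) of a formula under a quantifier-free interpretation,
with an accumulator carrying the pending universe-guard of the current quantifier block:
Ξ(R(z̄)) = ξ_R(z̄) ∧ ⋀ᵢ ξ_U(zᵢ); Ξ(¬R(z̄)) = ¬ξ_R(z̄) ∧ ⋀ᵢ ξ_U(zᵢ) (¬ξ_R in NNF);
Ξ commutes with conjunctions and disjunctions; Ξ(∃x̄ ⋀ᵢφᵢ) = ∃x̄(⋀ⱼ ξ_U(xⱼ) ∧ ⋀ᵢΞ(φᵢ));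
Ξ(∀x̄ ⋁ᵢφᵢ) = ∀x̄((⋁ⱼ ¬ξ_U(xⱼ)) ∨ ⋁ᵢΞ(φᵢ)) (¬ξ_U in NNF). -/
def trA (Ξ : QFInterp σ τ) : ∀ {n : ℕ}, Option (Bool × Formula σ n) → Formula τ n → Formula σ n
  | _, mode, .tru => closeG mode .tru
  | _, mode, .fls => closeG mode .fls
  | _, mode, .rel R ts =>
      closeG mode ((relabel ts (Ξ.xiR R)).and (finAnd (fun i => Ξ.uAt (ts i))))
  | _, mode, .nrel R ts =>
      closeG mode ((nnfNeg (relabel ts (Ξ.xiR R))).and (finAnd (fun i => Ξ.uAt (ts i))))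
  | _, mode, .eq i j => closeG mode ((Formula.eq i j).and ((Ξ.uAt i).and (Ξ.uAt j)))
  | _, mode, .neq i j => closeG mode ((Formula.neq i j).and ((Ξ.uAt i).and (Ξ.uAt j)))
  | _, some (true, g), .iAnd I f =>
      .iAnd (Option I) (fun o => o.elim g (fun i => Ξ.trA none (f i)))
  | _, some (false, g), .iOr I f =>
      .iOr (Option I) (fun o => o.elim g (fun i => Ξ.trA none (f i)))
  | _, mode, .iAnd I f => closeG mode (.iAnd I (fun i => Ξ.trA none (f i)))
  | _, mode, .iOr I f => closeG mode (.iOr I (fun i => Ξ.trA none (f i)))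
  | _, some (true, g), .ex φ =>
      .ex (Ξ.trA (some (true, (relabel Fin.castSucc g).and Ξ.uLast)) φ)
  | _, some (false, g), .all φ =>
      .all (Ξ.trA (some (false, (relabel Fin.castSucc g).or (nnfNeg Ξ.uLast))) φ)
  | _, mode, .ex φ => closeG mode (.ex (Ξ.trA (some (true, Ξ.uLast)) φ))
  | _, mode, .all φ => closeG mode (.all (Ξ.trA (some (false, nnfNeg Ξ.uLast)) φ))

/-- The translation Ξ(φ) of a formula. -/
def translate (Ξ : QFInterp σ τ) {n : ℕ} (φ : Formula τ n) : Formula σ n :=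
  Ξ.trA none φ

/-- The size |Ξ| of an interpretation: the sum of the sizes of its formulae. -/
noncomputable def size [Fintype τ.Rel] (Ξ : QFInterp σ τ) : Cardinal :=
  sizeC Ξ.xiU + ∑ R : τ.Rel, sizeC (Ξ.xiR R)

end QFInterp


/- ======================= auxiliary development ======================= -/

section Aux

universe uC
variable {τ : Vocab}

/-- Mixed assignment determined by a side-pattern `g`. -/
def mix {q r₁ r₂ : ℕ} {α β : Type} (g : Fin q → Fin r₁ ⊕ Fin r₂)
    (a₁ : Fin r₁ → α) (a₂ : Fin r₂ → β) : Fin q → α ⊕ β :=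
  fun i => Sum.elim (fun j => Sum.inl (a₁ j)) (fun j => Sum.inr (a₂ j)) (g i)

lemma Sat_nnfNeg (A : Struc τ) : ∀ {n : ℕ} (φ : Formula τ n) (v : Fin n → A.carrier),
    Sat A (nnfNeg φ) v ↔ ¬ Sat A φ v := by
  intro n φ
  induction φ with
  | tru => intro v; simp [Sat, nnfNeg]
  | fls => intro v; simp [Sat, nnfNeg]
  | rel R ts => intro v; simp [Sat, nnfNeg]
  | nrel R ts => intro v; simp [Sat, nnfNeg]
  | eq i j => intro v; simp [Sat, nnfNeg]
  | neq i j => intro v; simp [Sat, nnfNeg]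
  | iAnd I f ih => intro v; simp [Sat, nnfNeg, ih, not_forall]
  | iOr I f ih => intro v; simp [Sat, nnfNeg, ih, not_exists]
  | ex φ ih => intro v; simp [Sat, nnfNeg, ih, not_exists]
  | all φ ih => intro v; simp [Sat, nnfNeg, ih, not_forall]

lemma IsQF.nnf : ∀ {n : ℕ} {φ : Formula τ n}, IsQF φ → IsQF (nnfNeg φ) := by
  intro n φ h
  induction h with
  | tru => exact .fls
  | fls => exact .tru
  | rel R ts => exact .nrel R ts
  | nrel R ts => exact .rel R ts
  | eq i j => exact .neq i j
  | neq i j => exact .eq i j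
  | iAnd I hI f hf ih => exact .iOr I hI _ ih
  | iOr I hI f hf ih => exact .iAnd I hI _ ih

lemma rank_qf : ∀ {n : ℕ} {φ : Formula τ n}, IsQF φ → rank φ = 0 := by
  intro n φ h
  induction h with
  | tru => simp [rank]
  | fls => simp [rank]
  | rel R ts => simp [rank]
  | nrel R ts => simp [rank]
  | eq i j => simp [rank]
  | neq i j => simp [rank]
  | iAnd I hI f hf ih =>
      simp only [rank]
      exact le_antisymm (ciSup_le' fun i => (ih i).le) (zero_le)
  | iOr I hI f hf ih =>
      simp only [rank]
      exact le_antisymm (ciSup_le' fun i => (ih i).le) (zero_le)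

/-- Rectangular DNF decomposition of `φ` over annotated disjoint unions. -/
def DnfOf {q r₁ r₂ : ℕ} (cond : ∀ r : ℕ, Formula τ r → Prop)
    (φ : Formula (annotV τ) q) (g : Fin q → Fin r₁ ⊕ Fin r₂) : Prop :=
  ∃ (J : Type) (θ : J → Formula τ r₁) (η : J → Formula τ r₂),
    Finite J ∧
    (∀ j, cond r₁ (θ j) ∧ cond r₂ (η j) ∧ rank.{uC} (θ j) ≤ rank.{uC} φ ∧ rank.{uC} (η j) ≤ rank.{uC} φ) ∧
    ∀ (A₁ A₂ : Struc τ) (a₁ : Fin r₁ → A₁.carrier) (a₂ : Fin r₂ → A₂.carrier),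
      Sat (adu A₁ A₂) φ (mix g a₁ a₂) ↔ ∃ j, Sat A₁ (θ j) a₁ ∧ Sat A₂ (η j) a₂

/-- Rectangular CNF decomposition of `φ` over annotated disjoint unions. -/
def CnfOf {q r₁ r₂ : ℕ} (cond : ∀ r : ℕ, Formula τ r → Prop)
    (φ : Formula (annotV τ) q) (g : Fin q → Fin r₁ ⊕ Fin r₂) : Prop :=
  ∃ (J : Type) (θ : J → Formula τ r₁) (η : J → Formula τ r₂),
    Finite J ∧
    (∀ j, cond r₁ (θ j) ∧ cond r₂ (η j) ∧ rank.{uC} (θ j) ≤ rank.{uC} φ ∧ rank.{uC} (η j) ≤ rank.{uC} φ) ∧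
    ∀ (A₁ A₂ : Struc τ) (a₁ : Fin r₁ → A₁.carrier) (a₂ : Fin r₂ → A₂.carrier),
      Sat (adu A₁ A₂) φ (mix g a₁ a₂) ↔ ∀ j, Sat A₁ (θ j) a₁ ∨ Sat A₂ (η j) a₂

lemma DnfOf.of_qf_pieces {q r₁ r₂ : ℕ} {φ : Formula (annotV τ) q}
    {g : Fin q → Fin r₁ ⊕ Fin r₂} (J : Type) [hJ : Finite J]
    (θ : J → Formula τ r₁) (η : J → Formula τ r₂)
    (hθ : ∀ j, IsQF (θ j)) (hη : ∀ j, IsQF (η j))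
    (hsem : ∀ (A₁ A₂ : Struc τ) (a₁ : Fin r₁ → A₁.carrier) (a₂ : Fin r₂ → A₂.carrier),
      Sat (adu A₁ A₂) φ (mix g a₁ a₂) ↔ ∃ j, Sat A₁ (θ j) a₁ ∧ Sat A₂ (η j) a₂) :
    DnfOf (fun _ ψ => IsQF ψ) φ g :=
  ⟨J, θ, η, hJ, fun j => ⟨hθ j, hη j, by rw [rank_qf (hθ j)]; exact zero_le,
      by rw [rank_qf (hη j)]; exact zero_le⟩, hsem⟩

/-- Characterization of relational atoms over annotated disjoint unions. -/
lemma adu_rel_some (S : τ.Rel) {q r₁ r₂ : ℕ} (ts : Fin ((annotV τ).arity (some S)) → Fin q)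
    (g : Fin q → Fin r₁ ⊕ Fin r₂) (A₁ A₂ : Struc τ)
    (a₁ : Fin r₁ → A₁.carrier) (a₂ : Fin r₂ → A₂.carrier) :
    Sat (adu A₁ A₂) (Formula.rel (some S) ts) (mix g a₁ a₂) ↔
      ((∃ h : (∃ w : Fin (τ.arity S) → Fin r₁, ∀ i, g (ts i) = Sum.inl (w i)),
          A₁.rel S fun i => a₁ (h.choose i)) ∨
       (∃ h : (∃ w : Fin (τ.arity S) → Fin r₂, ∀ i, g (ts i) = Sum.inr (w i)),
          A₂.rel S fun i => a₂ (h.choose i))) := by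
  show ((∃ w, A₁.rel S w ∧ (fun i => mix g a₁ a₂ (ts i)) = fun i => Sum.inl (w i)) ∨
        (∃ w, A₂.rel S w ∧ (fun i => mix g a₁ a₂ (ts i)) = fun i => Sum.inr (w i))) ↔ _
  apply or_congr
  · constructor
    · rintro ⟨w, hw, he⟩
      have he' : ∀ i, mix g a₁ a₂ (ts i) = Sum.inl (w i) := fun i => congrFun he i
      have hex : ∀ i, ∃ u, g (ts i) = Sum.inl u := by
        intro i
        rcases hgi : g (ts i) with u | u
        · exact ⟨u, rfl⟩
        · exact absurd (he' i) (by simp [mix, hgi])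
      have hL : ∃ w' : Fin (τ.arity S) → Fin r₁, ∀ i, g (ts i) = Sum.inl (w' i) := by
        choose w' hw' using hex; exact ⟨w', hw'⟩
      refine ⟨hL, ?_⟩
      have hch := hL.choose_spec
      have hww : (fun i => a₁ (hL.choose i)) = w := by
        funext i
        have h1 := he' i
        simp only [mix, hch i, Sum.elim_inl] at h1
        exact Sum.inl.inj h1
      rw [hww]; exact hw
    · rintro ⟨hL, hrel⟩
      exact ⟨fun i => a₁ (hL.choose i), hrel, by
        funext i; simp [mix, hL.choose_spec i]⟩
  · constructor
    · rintro ⟨w, hw, he⟩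
      have he' : ∀ i, mix g a₁ a₂ (ts i) = Sum.inr (w i) := fun i => congrFun he i
      have hex : ∀ i, ∃ u, g (ts i) = Sum.inr u := by
        intro i
        rcases hgi : g (ts i) with u | u
        · exact absurd (he' i) (by simp [mix, hgi])
        · exact ⟨u, rfl⟩
      have hR : ∃ w' : Fin (τ.arity S) → Fin r₂, ∀ i, g (ts i) = Sum.inr (w' i) := by
        choose w' hw' using hex; exact ⟨w', hw'⟩
      refine ⟨hR, ?_⟩
      have hch := hR.choose_spec
      have hww : (fun i => a₂ (hR.choose i)) = w := by
        funext i
        have h1 := he' i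
        simp only [mix, hch i, Sum.elim_inr] at h1
        exact Sum.inr.inj h1
      rw [hww]; exact hw
    · rintro ⟨hR, hrel⟩
      exact ⟨fun i => a₂ (hR.choose i), hrel, by
        funext i; simp [mix, hR.choose_spec i]⟩

end Aux
section Aux2
universe uC
variable {τ : Vocab}

lemma sat_tru {n : ℕ} (A : Struc τ) (v : Fin n → A.carrier) : Sat A Formula.tru v := by
  simp [Sat]

lemma exists_prop_iff' {p : Prop} (hp : p) {q : p → Prop} : (∃ h : p, q h) ↔ q hp :=
  ⟨fun ⟨_, hq⟩ => hq, fun h => ⟨hp, h⟩⟩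

lemma qf_dnf : ∀ {q : ℕ} {φ : Formula (annotV τ) q}, IsQF φ →
    ∀ {r₁ r₂ : ℕ} (g : Fin q → Fin r₁ ⊕ Fin r₂), DnfOf.{uC} (fun _ ψ => IsQF ψ) φ g := by
  intro q φ h
  induction h with
  | tru =>
    intro r₁ r₂ g
    exact .of_qf_pieces PUnit (fun _ => .tru) (fun _ => .tru)
      (fun _ => .tru) (fun _ => .tru) (fun A₁ A₂ a₁ a₂ => by simp [Sat])
  | fls =>
    intro r₁ r₂ g
    exact .of_qf_pieces Empty (fun j => j.elim) (fun j => j.elim)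
      (fun j => j.elim) (fun j => j.elim) (fun A₁ A₂ a₁ a₂ => by simp [Sat])
  | rel R ts =>
    intro r₁ r₂ g
    cases R with
    | none =>
      rcases hg : g (ts ⟨0, Nat.one_pos⟩) with u | u
      · exact .of_qf_pieces PUnit (fun _ => .tru) (fun _ => .tru)
          (fun _ => .tru) (fun _ => .tru)
          (fun A₁ A₂ a₁ a₂ => by simp only [Sat, adu, mix]; rw [hg]; simp)
      · exact .of_qf_pieces Empty (fun j => j.elim) (fun j => j.elim)
          (fun j => j.elim) (fun j => j.elim)
          (fun A₁ A₂ a₁ a₂ => by simp only [Sat, adu, mix]; rw [hg]; simp)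
    | some S =>
      classical
      by_cases hL : (∃ w : Fin (τ.arity S) → Fin r₁, ∀ i, g (ts i) = Sum.inl (w i)) <;>
        by_cases hR : (∃ w : Fin (τ.arity S) → Fin r₂, ∀ i, g (ts i) = Sum.inr (w i))
      · refine .of_qf_pieces Bool
          (fun b => cond b (Formula.rel S hL.choose) Formula.tru)
          (fun b => cond b Formula.tru (Formula.rel S hR.choose))
          (fun b => by cases b <;> first | exact .tru | exact .rel _ _)
          (fun b => by cases b <;> first | exact .tru | exact .rel _ _) ?_
        intro A₁ A₂ a₁ a₂
        rw [adu_rel_some, exists_prop_iff' hL, exists_prop_iff' hR]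
        simp only [Bool.exists_bool, Bool.cond_false, Bool.cond_true, Sat]
        tauto
      · refine .of_qf_pieces PUnit
          (fun _ => Formula.rel S hL.choose) (fun _ => Formula.tru)
          (fun _ => .rel _ _) (fun _ => .tru) ?_
        intro A₁ A₂ a₁ a₂
        rw [adu_rel_some, exists_prop_iff' hL]
        have h2 : (∃ h : (∃ w : Fin (τ.arity S) → Fin r₂, ∀ i, g (ts i) = Sum.inr (w i)),
            A₂.rel S fun i => a₂ (h.choose i)) ↔ False := ⟨fun ⟨h, _⟩ => hR h, False.elim⟩
        rw [h2]
        simp only [Sat]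
        tauto
      · refine .of_qf_pieces PUnit
          (fun _ => Formula.tru) (fun _ => Formula.rel S hR.choose)
          (fun _ => .tru) (fun _ => .rel _ _) ?_
        intro A₁ A₂ a₁ a₂
        rw [adu_rel_some, exists_prop_iff' hR]
        have h1 : (∃ h : (∃ w : Fin (τ.arity S) → Fin r₁, ∀ i, g (ts i) = Sum.inl (w i)),
            A₁.rel S fun i => a₁ (h.choose i)) ↔ False := ⟨fun ⟨h, _⟩ => hL h, False.elim⟩
        rw [h1]
        simp only [Sat]
        tauto
      · refine .of_qf_pieces Empty (fun j => j.elim) (fun j => j.elim)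
          (fun j => j.elim) (fun j => j.elim) ?_
        intro A₁ A₂ a₁ a₂
        rw [adu_rel_some]
        have h1 : (∃ h : (∃ w : Fin (τ.arity S) → Fin r₁, ∀ i, g (ts i) = Sum.inl (w i)),
            A₁.rel S fun i => a₁ (h.choose i)) ↔ False := ⟨fun ⟨h, _⟩ => hL h, False.elim⟩
        have h2 : (∃ h : (∃ w : Fin (τ.arity S) → Fin r₂, ∀ i, g (ts i) = Sum.inr (w i)),
            A₂.rel S fun i => a₂ (h.choose i)) ↔ False := ⟨fun ⟨h, _⟩ => hR h, False.elim⟩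
        rw [h1, h2]
        simp
  | nrel R ts =>
    intro r₁ r₂ g
    cases R with
    | none =>
      rcases hg : g (ts ⟨0, Nat.one_pos⟩) with u | u
      · exact .of_qf_pieces Empty (fun j => j.elim) (fun j => j.elim)
          (fun j => j.elim) (fun j => j.elim)
          (fun A₁ A₂ a₁ a₂ => by simp only [Sat, adu, mix]; rw [hg]; simp)
      · exact .of_qf_pieces PUnit (fun _ => .tru) (fun _ => .tru)
          (fun _ => .tru) (fun _ => .tru)
          (fun A₁ A₂ a₁ a₂ => by simp only [Sat, adu, mix]; rw [hg]; simp)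
    | some S =>
      classical
      have key : ∀ (A₁ A₂ : Struc τ) (a₁ : Fin r₁ → A₁.carrier) (a₂ : Fin r₂ → A₂.carrier),
          Sat (adu A₁ A₂) (Formula.nrel (some S) ts) (mix g a₁ a₂) ↔
          ¬ Sat (adu A₁ A₂) (Formula.rel (some S) ts) (mix g a₁ a₂) := fun _ _ _ _ => Iff.rfl
      by_cases hL : (∃ w : Fin (τ.arity S) → Fin r₁, ∀ i, g (ts i) = Sum.inl (w i)) <;>
        by_cases hR : (∃ w : Fin (τ.arity S) → Fin r₂, ∀ i, g (ts i) = Sum.inr (w i))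
      · refine .of_qf_pieces PUnit
          (fun _ => Formula.nrel S hL.choose) (fun _ => Formula.nrel S hR.choose)
          (fun _ => .nrel _ _) (fun _ => .nrel _ _) ?_
        intro A₁ A₂ a₁ a₂
        rw [key, adu_rel_some, exists_prop_iff' hL, exists_prop_iff' hR, not_or]
        simp only [Sat]
        tauto
      · refine .of_qf_pieces PUnit
          (fun _ => Formula.nrel S hL.choose) (fun _ => Formula.tru)
          (fun _ => .nrel _ _) (fun _ => .tru) ?_
        intro A₁ A₂ a₁ a₂
        have h2 : (∃ h : (∃ w : Fin (τ.arity S) → Fin r₂, ∀ i, g (ts i) = Sum.inr (w i)),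
            A₂.rel S fun i => a₂ (h.choose i)) ↔ False := ⟨fun ⟨h, _⟩ => hR h, False.elim⟩
        rw [key, adu_rel_some, exists_prop_iff' hL, h2, not_or]
        simp only [Sat]
        tauto
      · refine .of_qf_pieces PUnit
          (fun _ => Formula.tru) (fun _ => Formula.nrel S hR.choose)
          (fun _ => .tru) (fun _ => .nrel _ _) ?_
        intro A₁ A₂ a₁ a₂
        have h1 : (∃ h : (∃ w : Fin (τ.arity S) → Fin r₁, ∀ i, g (ts i) = Sum.inl (w i)),
            A₁.rel S fun i => a₁ (h.choose i)) ↔ False := ⟨fun ⟨h, _⟩ => hL h, False.elim⟩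
        rw [key, adu_rel_some, h1, exists_prop_iff' hR, not_or]
        simp only [Sat]
        tauto
      · refine .of_qf_pieces PUnit
          (fun _ => Formula.tru) (fun _ => Formula.tru)
          (fun _ => .tru) (fun _ => .tru) ?_
        intro A₁ A₂ a₁ a₂
        have h1 : (∃ h : (∃ w : Fin (τ.arity S) → Fin r₁, ∀ i, g (ts i) = Sum.inl (w i)),
            A₁.rel S fun i => a₁ (h.choose i)) ↔ False := ⟨fun ⟨h, _⟩ => hL h, False.elim⟩
        have h2 : (∃ h : (∃ w : Fin (τ.arity S) → Fin r₂, ∀ i, g (ts i) = Sum.inr (w i)),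
            A₂.rel S fun i => a₂ (h.choose i)) ↔ False := ⟨fun ⟨h, _⟩ => hR h, False.elim⟩
        rw [key, adu_rel_some, h1, h2, not_or]
        simp only [Sat]
        tauto
  | eq i j =>
    intro r₁ r₂ g
    rcases hgi : g i with x | x <;> rcases hgj : g j with y | y
    · exact .of_qf_pieces PUnit (fun _ => .eq x y) (fun _ => .tru)
        (fun _ => .eq x y) (fun _ => .tru)
        (fun A₁ A₂ a₁ a₂ => by simp [Sat, adu, mix, hgi, hgj, Sum.inl.injEq, Sum.inr.injEq])
    · exact .of_qf_pieces Empty (fun j => j.elim) (fun j => j.elim)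
        (fun j => j.elim) (fun j => j.elim)
        (fun A₁ A₂ a₁ a₂ => by simp [Sat, adu, mix, hgi, hgj, Sum.inl.injEq, Sum.inr.injEq])
    · exact .of_qf_pieces Empty (fun j => j.elim) (fun j => j.elim)
        (fun j => j.elim) (fun j => j.elim)
        (fun A₁ A₂ a₁ a₂ => by simp [Sat, adu, mix, hgi, hgj, Sum.inl.injEq, Sum.inr.injEq])
    · exact .of_qf_pieces PUnit (fun _ => .tru) (fun _ => .eq x y)
        (fun _ => .tru) (fun _ => .eq x y)
        (fun A₁ A₂ a₁ a₂ => by simp [Sat, adu, mix, hgi, hgj, Sum.inl.injEq, Sum.inr.injEq])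
  | neq i j =>
    intro r₁ r₂ g
    rcases hgi : g i with x | x <;> rcases hgj : g j with y | y
    · exact .of_qf_pieces PUnit (fun _ => .neq x y) (fun _ => .tru)
        (fun _ => .neq x y) (fun _ => .tru)
        (fun A₁ A₂ a₁ a₂ => by simp [Sat, adu, mix, hgi, hgj, Sum.inl.injEq, Sum.inr.injEq])
    · exact .of_qf_pieces PUnit (fun _ => .tru) (fun _ => .tru)
        (fun _ => .tru) (fun _ => .tru)
        (fun A₁ A₂ a₁ a₂ => by simp [Sat, adu, mix, hgi, hgj, Sum.inl.injEq, Sum.inr.injEq])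
    · exact .of_qf_pieces PUnit (fun _ => .tru) (fun _ => .tru)
        (fun _ => .tru) (fun _ => .tru)
        (fun A₁ A₂ a₁ a₂ => by simp [Sat, adu, mix, hgi, hgj, Sum.inl.injEq, Sum.inr.injEq])
    · exact .of_qf_pieces PUnit (fun _ => .tru) (fun _ => .neq x y)
        (fun _ => .tru) (fun _ => .neq x y)
        (fun A₁ A₂ a₁ a₂ => by simp [Sat, adu, mix, hgi, hgj, Sum.inl.injEq, Sum.inr.injEq])
  | iAnd I hI f hf ih =>
    intro r₁ r₂ g
    haveI := hI
    have H := fun i => ih i g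
    choose J θ η hh using H
    haveI : ∀ i, Finite (J i) := fun i => (hh i).1
    refine .of_qf_pieces (∀ i, J i)
      (fun c => .iAnd I fun i => θ i (c i)) (fun c => .iAnd I fun i => η i (c i))
      (fun c => .iAnd I hI _ fun i => ((hh i).2.1 (c i)).1)
      (fun c => .iAnd I hI _ fun i => ((hh i).2.1 (c i)).2.1) ?_
    intro A₁ A₂ a₁ a₂
    simp only [Sat]
    constructor
    · intro hsat
      have h2 := fun i => ((hh i).2.2 A₁ A₂ a₁ a₂).mp (hsat i)
      choose c hc1 hc2 using h2
      exact ⟨c, hc1, hc2⟩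
    · rintro ⟨c, hc1, hc2⟩ i
      exact ((hh i).2.2 A₁ A₂ a₁ a₂).mpr ⟨c i, hc1 i, hc2 i⟩
  | iOr I hI f hf ih =>
    intro r₁ r₂ g
    haveI := hI
    have H := fun i => ih i g
    choose J θ η hh using H
    haveI : ∀ i, Finite (J i) := fun i => (hh i).1
    refine .of_qf_pieces (Σ i, J i)
      (fun k => θ k.1 k.2) (fun k => η k.1 k.2)
      (fun k => ((hh k.1).2.1 k.2).1) (fun k => ((hh k.1).2.1 k.2).2.1) ?_
    intro A₁ A₂ a₁ a₂
    simp only [Sat]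
    constructor
    · rintro ⟨i, hi⟩
      obtain ⟨j, h1, h2⟩ := ((hh i).2.2 A₁ A₂ a₁ a₂).mp hi
      exact ⟨⟨i, j⟩, h1, h2⟩
    · rintro ⟨⟨i, j⟩, h1, h2⟩
      exact ⟨i, ((hh i).2.2 A₁ A₂ a₁ a₂).mpr ⟨j, h1, h2⟩⟩

lemma qf_cnf {q : ℕ} {φ : Formula (annotV τ) q} (h : IsQF φ)
    {r₁ r₂ : ℕ} (g : Fin q → Fin r₁ ⊕ Fin r₂) : CnfOf.{uC} (fun _ ψ => IsQF ψ) φ g := by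
  obtain ⟨J, θ, η, hfin, hc, hsem⟩ := qf_dnf.{uC} h.nnf g
  refine ⟨J, fun j => nnfNeg (θ j), fun j => nnfNeg (η j), hfin, ?_, ?_⟩
  · intro j
    refine ⟨(hc j).1.nnf, (hc j).2.1.nnf, ?_, ?_⟩
    · rw [rank_qf (hc j).1.nnf]; exact zero_le
    · rw [rank_qf (hc j).2.1.nnf]; exact zero_le
  · intro A₁ A₂ a₁ a₂
    have hiff : Sat (adu A₁ A₂) φ (mix g a₁ a₂) ↔
        ¬ Sat (adu A₁ A₂) (nnfNeg φ) (mix g a₁ a₂) := by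
      exact ((not_congr (Sat_nnfNeg (adu A₁ A₂) φ (mix g a₁ a₂))).trans not_not).symm
    rw [hiff, hsem]
    simp only [not_exists, Sat_nnfNeg]
    exact forall_congr' fun j => by tauto

lemma DnfOf.zero {q r₁ r₂ : ℕ} {φ : Formula (annotV τ) q} {g : Fin q → Fin r₁ ⊕ Fin r₂}
    (h : DnfOf.{uC} (fun _ ψ => IsQF ψ) φ g) :
    DnfOf.{uC} (fun _ ψ => TSigma τ ℵ₀ 0 ψ) φ g := by
  obtain ⟨J, θ, η, hf, hc, hs⟩ := h
  exact ⟨J, θ, η, hf, fun j => ⟨.qf (hc j).1, .qf (hc j).2.1, (hc j).2.2⟩, hs⟩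

lemma CnfOf.zero {q r₁ r₂ : ℕ} {φ : Formula (annotV τ) q} {g : Fin q → Fin r₁ ⊕ Fin r₂}
    (h : CnfOf.{uC} (fun _ ψ => IsQF ψ) φ g) :
    CnfOf.{uC} (fun _ ψ => TPi τ ℵ₀ 0 ψ) φ g := by
  obtain ⟨J, θ, η, hf, hc, hs⟩ := h
  exact ⟨J, θ, η, hf, fun j => ⟨.qf (hc j).1, .qf (hc j).2.1, (hc j).2.2⟩, hs⟩

end Aux2
section Aux3
universe uC
variable {τ : Vocab}

/-- Extend a side-pattern by one variable on the left side. -/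
def gL {q r₁ r₂ : ℕ} (g : Fin q → Fin r₁ ⊕ Fin r₂) : Fin (q+1) → Fin (r₁+1) ⊕ Fin r₂ :=
  Fin.snoc (fun i => Sum.elim (fun j => Sum.inl j.castSucc) Sum.inr (g i)) (Sum.inl (Fin.last r₁))

/-- Extend a side-pattern by one variable on the right side. -/
def gR {q r₁ r₂ : ℕ} (g : Fin q → Fin r₁ ⊕ Fin r₂) : Fin (q+1) → Fin r₁ ⊕ Fin (r₂+1) :=
  Fin.snoc (fun i => Sum.elim Sum.inl (fun j => Sum.inr j.castSucc) (g i)) (Sum.inr (Fin.last r₂))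

lemma mix_snoc_left {q r₁ r₂ : ℕ} {α β : Type} (g : Fin q → Fin r₁ ⊕ Fin r₂)
    (a₁ : Fin r₁ → α) (a₂ : Fin r₂ → β) (b : α) :
    Fin.snoc (mix g a₁ a₂) (Sum.inl b) = mix (gL g) (Fin.snoc a₁ b) a₂ := by
  funext i
  refine Fin.lastCases ?_ (fun i => ?_) i
  · simp [mix, gL, Fin.snoc_last]
  · rcases hgi : g i with u | u <;> simp [mix, gL, Fin.snoc_castSucc, hgi]

lemma mix_snoc_right {q r₁ r₂ : ℕ} {α β : Type} (g : Fin q → Fin r₁ ⊕ Fin r₂)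
    (a₁ : Fin r₁ → α) (a₂ : Fin r₂ → β) (b : β) :
    Fin.snoc (mix g a₁ a₂) (Sum.inr b) = mix (gR g) a₁ (Fin.snoc a₂ b) := by
  funext i
  refine Fin.lastCases ?_ (fun i => ?_) i
  · simp [mix, gR, Fin.snoc_last]
  · rcases hgi : g i with u | u <;> simp [mix, gR, Fin.snoc_castSucc, hgi]

lemma main_decomp : ∀ {q : ℕ} (φ : Formula (annotV τ) q) (lam : Ordinal) {r₁ r₂ : ℕ}
    (g : Fin q → Fin r₁ ⊕ Fin r₂),
    (TSigma (annotV τ) ℵ₀ lam φ → DnfOf.{uC} (fun _ ψ => TSigma τ ℵ₀ lam ψ) φ g) ∧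
    (TPi (annotV τ) ℵ₀ lam φ → CnfOf.{uC} (fun _ ψ => TPi τ ℵ₀ lam ψ) φ g) := by
  intro q φ
  induction φ with
  | tru =>
    intro lam r₁ r₂ g
    constructor
    · intro h; cases h with | qf hq => exact (qf_dnf hq g).zero
    · intro h; cases h with | qf hq => exact (qf_cnf hq g).zero
  | fls =>
    intro lam r₁ r₂ g
    constructor
    · intro h; cases h with | qf hq => exact (qf_dnf hq g).zero
    · intro h; cases h with | qf hq => exact (qf_cnf hq g).zero
  | rel R ts =>
    intro lam r₁ r₂ g
    constructor
    · intro h; cases h with | qf hq => exact (qf_dnf hq g).zero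
    · intro h; cases h with | qf hq => exact (qf_cnf hq g).zero
  | nrel R ts =>
    intro lam r₁ r₂ g
    constructor
    · intro h; cases h with | qf hq => exact (qf_dnf hq g).zero
    · intro h; cases h with | qf hq => exact (qf_cnf hq g).zero
  | eq i j =>
    intro lam r₁ r₂ g
    constructor
    · intro h; cases h with | qf hq => exact (qf_dnf hq g).zero
    · intro h; cases h with | qf hq => exact (qf_cnf hq g).zero
  | neq i j =>
    intro lam r₁ r₂ g
    constructor
    · intro h; cases h with | qf hq => exact (qf_dnf hq g).zero
    · intro h; cases h with | qf hq => exact (qf_cnf hq g).zero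
  | iAnd I f ih =>
    intro lam r₁ r₂ g
    constructor
    · intro h
      cases h with
      | qf hq => exact (qf_dnf hq g).zero
      | conj I' f' hI lam' hlt hcomp =>
        classical
        haveI : Finite I := Cardinal.lt_aleph0_iff_finite.mp hI
        have H := fun i => (ih i (lam' i) g).2 (hcomp i)
        choose J θ η hh using H
        haveI : ∀ i, Finite (J i) := fun i => (hh i).1
        refine ⟨((Σ i, J i) → Bool),
          fun c => .iAnd {k : Σ i, J i // c k = true} (fun k => θ k.1.1 k.1.2),
          fun c => .iAnd {k : Σ i, J i // c k = false} (fun k => η k.1.1 k.1.2),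
          inferInstance, ?_, ?_⟩
        · intro c
          refine ⟨?_, ?_, ?_, ?_⟩
          · exact TSigma.conj _ _ (Cardinal.lt_aleph0_of_finite _)
              (fun k => lam' k.1.1) (fun k => hlt k.1.1) (fun k => ((hh k.1.1).2.1 k.1.2).1)
          · exact TSigma.conj _ _ (Cardinal.lt_aleph0_of_finite _)
              (fun k => lam' k.1.1) (fun k => hlt k.1.1) (fun k => ((hh k.1.1).2.1 k.1.2).2.1)
          · simp only [rank]
            exact ciSup_le' fun k => le_trans ((hh k.1.1).2.1 k.1.2).2.2.1
              (le_ciSup (Cardinal.bddAbove_range _) k.1.1)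
          · simp only [rank]
            exact ciSup_le' fun k => le_trans ((hh k.1.1).2.1 k.1.2).2.2.2
              (le_ciSup (Cardinal.bddAbove_range _) k.1.1)
        · intro A₁ A₂ a₁ a₂
          simp only [Sat]
          constructor
          · intro hsat
            refine ⟨fun k => decide (Sat A₁ (θ k.1 k.2) a₁), ?_, ?_⟩
            · rintro ⟨k, hk⟩
              exact of_decide_eq_true hk
            · rintro ⟨k, hk⟩
              exact (((hh k.1).2.2 A₁ A₂ a₁ a₂).mp (hsat k.1) k.2).resolve_left
                (of_decide_eq_false hk)
          · rintro ⟨c, hc1, hc2⟩ i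
            refine ((hh i).2.2 A₁ A₂ a₁ a₂).mpr fun j => ?_
            cases hcj : c ⟨i, j⟩ with
            | false => exact Or.inr (hc2 ⟨⟨i, j⟩, hcj⟩)
            | true => exact Or.inl (hc1 ⟨⟨i, j⟩, hcj⟩)
    · intro h
      cases h with | qf hq => exact (qf_cnf hq g).zero
  | iOr I f ih =>
    intro lam r₁ r₂ g
    constructor
    · intro h
      cases h with | qf hq => exact (qf_dnf hq g).zero
    · intro h
      cases h with
      | qf hq => exact (qf_cnf hq g).zero
      | disj I' f' hI lam' hlt hcomp =>
        classical
        haveI : Finite I := Cardinal.lt_aleph0_iff_finite.mp hI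
        have H := fun i => (ih i (lam' i) g).1 (hcomp i)
        choose J θ η hh using H
        haveI : ∀ i, Finite (J i) := fun i => (hh i).1
        refine ⟨((Σ i, J i) → Bool),
          fun c => .iOr {k : Σ i, J i // c k = true} (fun k => θ k.1.1 k.1.2),
          fun c => .iOr {k : Σ i, J i // c k = false} (fun k => η k.1.1 k.1.2),
          inferInstance, ?_, ?_⟩
        · intro c
          refine ⟨?_, ?_, ?_, ?_⟩
          · exact TPi.disj _ _ (Cardinal.lt_aleph0_of_finite _)
              (fun k => lam' k.1.1) (fun k => hlt k.1.1) (fun k => ((hh k.1.1).2.1 k.1.2).1)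
          · exact TPi.disj _ _ (Cardinal.lt_aleph0_of_finite _)
              (fun k => lam' k.1.1) (fun k => hlt k.1.1) (fun k => ((hh k.1.1).2.1 k.1.2).2.1)
          · simp only [rank]
            exact ciSup_le' fun k => le_trans ((hh k.1.1).2.1 k.1.2).2.2.1
              (le_ciSup (Cardinal.bddAbove_range _) k.1.1)
          · simp only [rank]
            exact ciSup_le' fun k => le_trans ((hh k.1.1).2.1 k.1.2).2.2.2
              (le_ciSup (Cardinal.bddAbove_range _) k.1.1)
        · intro A₁ A₂ a₁ a₂
          simp only [Sat]
          constructor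
          · rintro ⟨i, hi⟩ c
            obtain ⟨j, h1, h2⟩ := ((hh i).2.2 A₁ A₂ a₁ a₂).mp hi
            cases hcj : c ⟨i, j⟩ with
            | false => exact Or.inr ⟨⟨⟨i, j⟩, hcj⟩, h2⟩
            | true => exact Or.inl ⟨⟨⟨i, j⟩, hcj⟩, h1⟩
          · intro hall
            by_contra hno
            push_neg at hno
            have hnone : ∀ i j, ¬ (Sat A₁ (θ i j) a₁ ∧ Sat A₂ (η i j) a₂) := by
              intro i j hij
              exact hno i (((hh i).2.2 A₁ A₂ a₁ a₂).mpr ⟨j, hij.1, hij.2⟩)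
            have := hall (fun k => decide (¬ Sat A₁ (θ k.1 k.2) a₁))
            rcases this with ⟨⟨k, hk⟩, hsatθ⟩ | ⟨⟨k, hk⟩, hsatη⟩
            · exact absurd hsatθ (of_decide_eq_true hk)
            · have hθ : Sat A₁ (θ k.1 k.2) a₁ := by
                by_contra hn
                exact absurd (decide_eq_true hn) (by rw [hk]; simp)
              exact hnone k.1 k.2 ⟨hθ, hsatη⟩
  | ex ψ ih =>
    intro lam r₁ r₂ g
    constructor
    · intro h
      cases h with
      | qf hq => cases hq
      | ex hψ =>
        obtain ⟨J1, θ1, η1, hf1, hc1, hs1⟩ := (ih lam (gL g)).1 hψ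
        obtain ⟨J2, θ2, η2, hf2, hc2, hs2⟩ := (ih lam (gR g)).1 hψ
        haveI := hf1; haveI := hf2
        refine ⟨J1 ⊕ J2, Sum.elim (fun j => .ex (θ1 j)) θ2,
          Sum.elim η1 (fun j => .ex (η2 j)), inferInstance, ?_, ?_⟩
        · rintro (j | j)
          · refine ⟨TSigma.ex (hc1 j).1, (hc1 j).2.1, ?_, ?_⟩
            · simp only [Sum.elim_inl, rank]
              exact add_le_add (hc1 j).2.2.1 le_rfl
            · simp only [Sum.elim_inl, rank]
              exact le_trans (hc1 j).2.2.2 (self_le_add_right _ _)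
          · refine ⟨(hc2 j).1, TSigma.ex (hc2 j).2.1, ?_, ?_⟩
            · simp only [Sum.elim_inr, rank]
              exact le_trans (hc2 j).2.2.1 (self_le_add_right _ _)
            · simp only [Sum.elim_inr, rank]
              exact add_le_add (hc2 j).2.2.2 le_rfl
        · intro A₁ A₂ a₁ a₂
          simp only [Sat]
          constructor
          · rintro ⟨a, ha⟩
            cases a with
            | inl b =>
              erw [mix_snoc_left] at ha
              obtain ⟨j, h1, h2⟩ := (hs1 A₁ A₂ (Fin.snoc a₁ b) a₂).mp ha
              exact ⟨Sum.inl j, ⟨b, h1⟩, h2⟩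
            | inr b =>
              erw [mix_snoc_right] at ha
              obtain ⟨j, h1, h2⟩ := (hs2 A₁ A₂ a₁ (Fin.snoc a₂ b)).mp ha
              exact ⟨Sum.inr j, h1, ⟨b, h2⟩⟩
          · rintro ⟨j | j, h1, h2⟩
            · obtain ⟨b, hb⟩ := h1
              refine ⟨Sum.inl b, ?_⟩
              erw [mix_snoc_left]
              exact (hs1 A₁ A₂ (Fin.snoc a₁ b) a₂).mpr ⟨j, hb, h2⟩
            · obtain ⟨b, hb⟩ := h2
              refine ⟨Sum.inr b, ?_⟩
              erw [mix_snoc_right]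
              exact (hs2 A₁ A₂ a₁ (Fin.snoc a₂ b)).mpr ⟨j, h1, hb⟩
    · intro h
      cases h with
      | qf hq => cases hq
  | all ψ ih =>
    intro lam r₁ r₂ g
    constructor
    · intro h
      cases h with
      | qf hq => cases hq
    · intro h
      cases h with
      | qf hq => cases hq
      | all hψ =>
        obtain ⟨J1, θ1, η1, hf1, hc1, hs1⟩ := (ih lam (gL g)).2 hψ
        obtain ⟨J2, θ2, η2, hf2, hc2, hs2⟩ := (ih lam (gR g)).2 hψ
        haveI := hf1; haveI := hf2
        refine ⟨J1 ⊕ J2, Sum.elim (fun j => .all (θ1 j)) θ2,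
          Sum.elim η1 (fun j => .all (η2 j)), inferInstance, ?_, ?_⟩
        · rintro (j | j)
          · refine ⟨TPi.all (hc1 j).1, (hc1 j).2.1, ?_, ?_⟩
            · simp only [Sum.elim_inl, rank]
              exact add_le_add (hc1 j).2.2.1 le_rfl
            · simp only [Sum.elim_inl, rank]
              exact le_trans (hc1 j).2.2.2 (self_le_add_right _ _)
          · refine ⟨(hc2 j).1, TPi.all (hc2 j).2.1, ?_, ?_⟩
            · simp only [Sum.elim_inr, rank]
              exact le_trans (hc2 j).2.2.1 (self_le_add_right _ _)
            · simp only [Sum.elim_inr, rank]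
              exact add_le_add (hc2 j).2.2.2 le_rfl
        · intro A₁ A₂ a₁ a₂
          simp only [Sat]
          constructor
          · intro hsat j
            have hLall : ∀ b, ∀ j, Sat A₁ (θ1 j) (Fin.snoc a₁ b) ∨ Sat A₂ (η1 j) a₂ := by
              intro b
              refine (hs1 A₁ A₂ (Fin.snoc a₁ b) a₂).mp ?_
              rw [← mix_snoc_left]
              exact hsat (Sum.inl b)
            have hRall : ∀ b, ∀ j, Sat A₁ (θ2 j) a₁ ∨ Sat A₂ (η2 j) (Fin.snoc a₂ b) := by
              intro b
              refine (hs2 A₁ A₂ a₁ (Fin.snoc a₂ b)).mp ?_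
              rw [← mix_snoc_right]
              exact hsat (Sum.inr b)
            cases j with
            | inl j =>
              rcases forall_or_right.mp (fun b => hLall b j) with hθ | hη
              · exact Or.inl hθ
              · exact Or.inr hη
            | inr j =>
              have : (∀ b, Sat A₂ (η2 j) (Fin.snoc a₂ b)) ∨ Sat A₁ (θ2 j) a₁ :=
                forall_or_right.mp (fun b => (hRall b j).symm)
              rcases this with hη | hθ
              · exact Or.inr hη
              · exact Or.inl hθ
          · intro hj a
            cases a with
            | inl b =>
              erw [mix_snoc_left]
              refine (hs1 A₁ A₂ (Fin.snoc a₁ b) a₂).mpr fun j => ?_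
              rcases hj (Sum.inl j) with hθ | hη
              · exact Or.inl (hθ b)
              · exact Or.inr hη
            | inr b =>
              erw [mix_snoc_right]
              refine (hs2 A₁ A₂ a₁ (Fin.snoc a₂ b)).mpr fun j => ?_
              rcases hj (Sum.inr j) with hθ | hη
              · exact Or.inl hθ
              · exact Or.inr (hη b)

end Aux3
section Aux4
universe uC
variable {τ : Vocab}

def g0 (r₁ r₂ : ℕ) : Fin (r₁ + r₂) → Fin r₁ ⊕ Fin r₂ := Fin.append Sum.inl Sum.inr

lemma mix_g0 {r₁ r₂ : ℕ} {α β : Type} (a₁ : Fin r₁ → α) (a₂ : Fin r₂ → β) :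
    mix (g0 r₁ r₂) a₁ a₂ =
      Fin.append (fun i => Sum.inl (a₁ i)) (fun i => Sum.inr (a₂ i)) := by
  funext i
  refine Fin.addCases (fun i => ?_) (fun i => ?_) i <;>
    simp [mix, g0, Fin.append_left, Fin.append_right]

lemma eval_and {V : Type} (ζ : V → Bool) (p q : PropForm V) :
    (p.and q).eval ζ ↔ p.eval ζ ∧ q.eval ζ := by
  simp only [PropForm.and, PropForm.eval]
  constructor
  · intro h
    have h1 := h true
    have h2 := h false
    rw [if_pos rfl] at h1
    rw [if_neg Bool.false_ne_true] at h2
    exact ⟨h1, h2⟩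
  · rintro ⟨h1, h2⟩ b
    cases b
    · rw [if_neg Bool.false_ne_true]; exact h2
    · rw [if_pos rfl]; exact h1

lemma eval_or {V : Type} (ζ : V → Bool) (p q : PropForm V) :
    (p.or q).eval ζ ↔ p.eval ζ ∨ q.eval ζ := by
  simp only [PropForm.or, PropForm.eval]
  constructor
  · rintro ⟨b, hb⟩
    cases b
    · rw [if_neg Bool.false_ne_true] at hb; exact Or.inr hb
    · rw [if_pos rfl] at hb; exact Or.inl hb
  · rintro (h | h)
    · exact ⟨true, by rw [if_pos rfl]; exact h⟩
    · exact ⟨false, by rw [if_neg Bool.false_ne_true]; exact h⟩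

lemma finitary_and {V : Type} (p q : PropForm V) (hp : p.Finitary) (hq : q.Finitary) :
    (p.and q).Finitary := by
  refine .iAnd Bool inferInstance _ fun b => ?_
  cases b
  · simpa using hq
  · simpa using hp

lemma finitary_or {V : Type} (p q : PropForm V) (hp : p.Finitary) (hq : q.Finitary) :
    (p.or q).Finitary := by
  refine .iOr Bool inferInstance _ fun b => ?_
  cases b
  · simpa using hq
  · simpa using hp

/-- Build a reduction sequence from a rectangular DNF. -/
lemma redseq_of_dnf {r₁ r₂ : ℕ} (J : Type) [hJ : Finite J]
    (θ : J → Formula τ r₁) (η : J → Formula τ r₂) (A₁ A₂ : Struc τ)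
    (a₁ : Fin r₁ → A₁.carrier) (a₂ : Fin r₂ → A₂.carrier) :
    (RedSeq.Models ⟨J, θ, η, PropForm.iOr J
        (fun j => (PropForm.var (j, 0)).and (PropForm.var (j, 1)))⟩ A₁ A₂ a₁ a₂) ↔
      ∃ j, Sat A₁ (θ j) a₁ ∧ Sat A₂ (η j) a₂ := by
  classical
  constructor
  · rintro ⟨ζ, hβ, hm1, hm2⟩
    obtain ⟨j, hj⟩ := hβ
    rw [eval_and] at hj
    simp only [PropForm.eval] at hj
    exact ⟨j, (hm1 j).mp hj.1, (hm2 j).mp hj.2⟩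
  · rintro ⟨j, h1, h2⟩
    set ζ : J × Fin 2 → Bool :=
      fun p => decide (if p.2 = 0 then Sat A₁ (θ p.1) a₁ else Sat A₂ (η p.1) a₂) with hζ
    have z0 : ∀ i : J, ζ (i, 0) = true ↔ Sat A₁ (θ i) a₁ := fun i => by
      show decide (if (0 : Fin 2) = 0 then Sat A₁ (θ i) a₁ else Sat A₂ (η i) a₂) = true ↔ _
      rw [decide_eq_true_eq, if_pos rfl]
    have z1 : ∀ i : J, ζ (i, 1) = true ↔ Sat A₂ (η i) a₂ := fun i => by
      show decide (if (1 : Fin 2) = 0 then Sat A₁ (θ i) a₁ else Sat A₂ (η i) a₂) = true ↔ _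
      rw [decide_eq_true_eq, if_neg (by decide : ¬ (1 : Fin 2) = 0)]
    refine ⟨ζ, ?_, ?_, ?_⟩
    · refine ⟨j, (eval_and _ _ _).mpr ⟨?_, ?_⟩⟩
      · exact (z0 j).mpr h1
      · exact (z1 j).mpr h2
    · exact z0
    · exact z1

/-- Build a reduction sequence from a rectangular CNF. -/
lemma redseq_of_cnf {r₁ r₂ : ℕ} (J : Type) [hJ : Finite J]
    (θ : J → Formula τ r₁) (η : J → Formula τ r₂) (A₁ A₂ : Struc τ)
    (a₁ : Fin r₁ → A₁.carrier) (a₂ : Fin r₂ → A₂.carrier) :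
    (RedSeq.Models ⟨J, θ, η, PropForm.iAnd J
        (fun j => (PropForm.var (j, 0)).or (PropForm.var (j, 1)))⟩ A₁ A₂ a₁ a₂) ↔
      ∀ j, Sat A₁ (θ j) a₁ ∨ Sat A₂ (η j) a₂ := by
  classical
  constructor
  · rintro ⟨ζ, hβ, hm1, hm2⟩ j
    have hj := hβ j
    rw [eval_or] at hj
    simp only [PropForm.eval] at hj
    rcases hj with h | h
    · exact Or.inl ((hm1 j).mp h)
    · exact Or.inr ((hm2 j).mp h)
  · intro hall
    set ζ : J × Fin 2 → Bool :=
      fun p => decide (if p.2 = 0 then Sat A₁ (θ p.1) a₁ else Sat A₂ (η p.1) a₂) with hζ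
    have z0 : ∀ i : J, ζ (i, 0) = true ↔ Sat A₁ (θ i) a₁ := fun i => by
      show decide (if (0 : Fin 2) = 0 then Sat A₁ (θ i) a₁ else Sat A₂ (η i) a₂) = true ↔ _
      rw [decide_eq_true_eq, if_pos rfl]
    have z1 : ∀ i : J, ζ (i, 1) = true ↔ Sat A₂ (η i) a₂ := fun i => by
      show decide (if (1 : Fin 2) = 0 then Sat A₁ (θ i) a₁ else Sat A₂ (η i) a₂) = true ↔ _
      rw [decide_eq_true_eq, if_neg (by decide : ¬ (1 : Fin 2) = 0)]
    refine ⟨ζ, ?_, ?_, ?_⟩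
    · intro j
      rw [eval_or]
      rcases hall j with h | h
      · exact Or.inl ((z0 j).mpr h)
      · exact Or.inr ((z1 j).mpr h)
    · exact z0
    · exact z1

end Aux4
section Aux5
universe uu vv
variable {τ : Vocab}

lemma rank_lift : ∀ {q : ℕ} (φ : Formula τ q),
    rank.{max uu vv} φ = Cardinal.lift.{max uu vv} (rank.{uu} φ) := by
  intro q φ
  induction φ with
  | tru => simp [rank]
  | fls => simp [rank]
  | rel R ts => simp [rank]
  | nrel R ts => simp [rank]
  | eq i j => simp [rank]
  | neq i j => simp [rank]
  | iAnd I f ih =>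
      simp only [rank]
      rw [Cardinal.lift_iSup (Cardinal.bddAbove_range _)]
      exact iSup_congr ih
  | iOr I f ih =>
      simp only [rank]
      rw [Cardinal.lift_iSup (Cardinal.bddAbove_range _)]
      exact iSup_congr ih
  | ex φ ih => simp only [rank, Cardinal.lift_add, Cardinal.lift_one, ih]
  | all φ ih => simp only [rank, Cardinal.lift_add, Cardinal.lift_one, ih]

lemma rank_le_nat_lift {q : ℕ} (φ : Formula τ q) (m : ℕ) :
    rank.{max uu vv} φ ≤ (m : Cardinal.{max uu vv}) ↔ rank.{uu} φ ≤ (m : Cardinal.{uu}) := by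
  rw [rank_lift.{uu, vv} φ,
    show (m : Cardinal.{max uu vv}) = Cardinal.lift.{max uu vv} (m : Cardinal.{uu}) from
      (Cardinal.lift_natCast m).symm,
    Cardinal.lift_le]

lemma rank_le_nat_univ {q : ℕ} (φ : Formula τ q) (m : ℕ) :
    rank.{uu} φ ≤ (m : Cardinal.{uu}) ↔ rank.{vv} φ ≤ (m : Cardinal.{vv}) :=
  (rank_le_nat_lift.{uu, vv} φ m).symm.trans (rank_le_nat_lift.{vv, uu} φ m)

lemma level_transfer : ∀ {q : ℕ} (φ : Formula τ q) {lam : Ordinal.{uu}} (mu : Ordinal.{vv}),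
    Ordinal.lift.{max uu vv} lam = Ordinal.lift.{max uu vv} mu →
    (TSigma τ ℵ₀ lam φ → TSigma τ ℵ₀ mu φ) ∧ (TPi τ ℵ₀ lam φ → TPi τ ℵ₀ mu φ) := by
  have hzero : ∀ (mu : Ordinal.{vv}),
      Ordinal.lift.{max uu vv} (0 : Ordinal.{uu}) = Ordinal.lift.{max uu vv} mu → mu = 0 := by
    intro mu heq
    have h0 : Ordinal.lift.{max uu vv} mu = 0 := heq.symm.trans Ordinal.lift_zero
    rwa [show (0 : Ordinal.{max uu vv}) = Ordinal.lift.{max uu vv} (0 : Ordinal.{vv}) from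
      Ordinal.lift_zero.symm, Ordinal.lift_inj] at h0
  intro q φ
  induction φ with
  | tru =>
    intro lam mu heq
    constructor
    · intro h; cases h with | qf hq => obtain rfl := hzero mu heq; exact .qf hq
    · intro h; cases h with | qf hq => obtain rfl := hzero mu heq; exact .qf hq
  | fls =>
    intro lam mu heq
    constructor
    · intro h; cases h with | qf hq => obtain rfl := hzero mu heq; exact .qf hq
    · intro h; cases h with | qf hq => obtain rfl := hzero mu heq; exact .qf hq
  | rel R ts =>
    intro lam mu heq
    constructor
    · intro h; cases h with | qf hq => obtain rfl := hzero mu heq; exact .qf hq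
    · intro h; cases h with | qf hq => obtain rfl := hzero mu heq; exact .qf hq
  | nrel R ts =>
    intro lam mu heq
    constructor
    · intro h; cases h with | qf hq => obtain rfl := hzero mu heq; exact .qf hq
    · intro h; cases h with | qf hq => obtain rfl := hzero mu heq; exact .qf hq
  | eq i j =>
    intro lam mu heq
    constructor
    · intro h; cases h with | qf hq => obtain rfl := hzero mu heq; exact .qf hq
    · intro h; cases h with | qf hq => obtain rfl := hzero mu heq; exact .qf hq
  | neq i j =>
    intro lam mu heq
    constructor
    · intro h; cases h with | qf hq => obtain rfl := hzero mu heq; exact .qf hq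
    · intro h; cases h with | qf hq => obtain rfl := hzero mu heq; exact .qf hq
  | iAnd I f ih =>
    intro lam mu heq
    constructor
    · intro h
      cases h with
      | qf hq => obtain rfl := hzero mu heq; exact .qf hq
      | conj I' f' hI lam' hlt hcomp =>
        have hblt : ∀ i, Ordinal.lift.{max uu vv} (lam' i) < Ordinal.lift.{max uu vv} mu :=
          fun i => heq ▸ (Ordinal.lift_lt.mpr (hlt i))
        choose mu' hlt' heq' using fun i => Ordinal.lt_lift_iff.mp (hblt i)
        exact TSigma.conj I f hI mu' hlt'
          (fun i => (ih i (mu' i) (heq' i).symm).2 (hcomp i))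
    · intro h
      cases h with
      | qf hq => obtain rfl := hzero mu heq; exact .qf hq
  | iOr I f ih =>
    intro lam mu heq
    constructor
    · intro h
      cases h with
      | qf hq => obtain rfl := hzero mu heq; exact .qf hq
    · intro h
      cases h with
      | qf hq => obtain rfl := hzero mu heq; exact .qf hq
      | disj I' f' hI lam' hlt hcomp =>
        have hblt : ∀ i, Ordinal.lift.{max uu vv} (lam' i) < Ordinal.lift.{max uu vv} mu :=
          fun i => heq ▸ (Ordinal.lift_lt.mpr (hlt i))
        choose mu' hlt' heq' using fun i => Ordinal.lt_lift_iff.mp (hblt i)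
        exact TPi.disj I f hI mu' hlt'
          (fun i => (ih i (mu' i) (heq' i).symm).1 (hcomp i))
  | ex ψ ih =>
    intro lam mu heq
    constructor
    · intro h
      cases h with
      | qf hq => cases hq
      | ex hψ => exact TSigma.ex ((ih mu heq).1 hψ)
    · intro h
      cases h with
      | qf hq => cases hq
  | all ψ ih =>
    intro lam mu heq
    constructor
    · intro h
      cases h with
      | qf hq => cases hq
    · intro h
      cases h with
      | qf hq => cases hq
      | all hψ => exact TPi.all ((ih mu heq).2 hψ)

lemma lift_natCast_eq (n : ℕ) :
    Ordinal.lift.{max uu vv} ((n : ℕ) : Ordinal.{uu}) =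
      Ordinal.lift.{max uu vv} ((n : ℕ) : Ordinal.{vv}) := by
  simp [Ordinal.lift_natCast]

lemma tsigma_univ {q : ℕ} {φ : Formula τ q} (n : ℕ)
    (h : TSigma τ ℵ₀ ((n : ℕ) : Ordinal.{uu}) φ) : TSigma τ ℵ₀ ((n : ℕ) : Ordinal.{vv}) φ :=
  (level_transfer φ _ (lift_natCast_eq n)).1 h

lemma tpi_univ {q : ℕ} {φ : Formula τ q} (n : ℕ)
    (h : TPi τ ℵ₀ ((n : ℕ) : Ordinal.{uu}) φ) : TPi τ ℵ₀ ((n : ℕ) : Ordinal.{vv}) φ :=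
  (level_transfer φ _ (lift_natCast_eq n)).2 h

end Aux5
/-- For n, m ≥ 0 and L one of tΣ_n[m] or tΠ_n[m] (= tΣ_{ω,n}[m], tΠ_{ω,n}[m]),
every L formula φ(x̄₁,x̄₂) over τ̱ has an L reduction sequence over τ (with finite sequences of
formulae of the same class and a finitary propositional formula β) that is a Feferman–Vaught
decomposition of φ over the annotated disjoint union operation. -/
theorem stmt6 (τ : Vocab) [Fintype τ.Rel] (n m : ℕ) (r₁ r₂ : ℕ)
    (φ : Formula (annotV τ) (r₁ + r₂)) :
    (TSigma (annotV τ) ℵ₀ (n : Ordinal) φ → rank φ ≤ (m : Cardinal) →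
      ∃ D : RedSeq τ r₁ r₂,
        (∀ i, TSigma τ ℵ₀ (n : Ordinal) (D.Δ₁ i) ∧ rank (D.Δ₁ i) ≤ (m : Cardinal)) ∧
        (∀ i, TSigma τ ℵ₀ (n : Ordinal) (D.Δ₂ i) ∧ rank (D.Δ₂ i) ≤ (m : Cardinal)) ∧
        Finite D.I ∧ D.β.Finitary ∧ FVDecompADU φ D) ∧
    (TPi (annotV τ) ℵ₀ (n : Ordinal) φ → rank φ ≤ (m : Cardinal) →
      ∃ D : RedSeq τ r₁ r₂,
        (∀ i, TPi τ ℵ₀ (n : Ordinal) (D.Δ₁ i) ∧ rank (D.Δ₁ i) ≤ (m : Cardinal)) ∧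
        (∀ i, TPi τ ℵ₀ (n : Ordinal) (D.Δ₂ i) ∧ rank (D.Δ₂ i) ≤ (m : Cardinal)) ∧
        Finite D.I ∧ D.β.Finitary ∧ FVDecompADU φ D) := by
  constructor
  · intro h hrank
    have h0 : TSigma (annotV τ) ℵ₀ ((n : ℕ) : Ordinal.{0}) φ := tsigma_univ n h
    have hrank0 : rank.{0} φ ≤ (m : Cardinal.{0}) := (rank_le_nat_univ φ m).mp hrank
    have hd : DnfOf.{0} (fun _ ψ => TSigma τ ℵ₀ ((n : ℕ) : Ordinal.{0}) ψ) φ (g0 r₁ r₂) :=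
      (main_decomp φ _ (g0 r₁ r₂)).1 h0
    obtain ⟨J, θ, η, hf, hc, hs⟩ := hd
    haveI := hf
    refine ⟨⟨J, θ, η, PropForm.iOr J (fun j => (PropForm.var (j, 0)).and (PropForm.var (j, 1)))⟩,
      ?_, ?_, hf, ?_, ?_⟩
    · exact fun j => ⟨tsigma_univ n (hc j).1,
        (rank_le_nat_univ (θ j) m).mp (le_trans (hc j).2.2.1 hrank0)⟩
    · exact fun j => ⟨tsigma_univ n (hc j).2.1,
        (rank_le_nat_univ (η j) m).mp (le_trans (hc j).2.2.2 hrank0)⟩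
    · exact .iOr J hf _ fun j => finitary_and _ _ (.var _) (.var _)
    · intro A₁ A₂ a₁ a₂
      erw [← mix_g0 a₁ a₂, hs A₁ A₂ a₁ a₂, redseq_of_dnf J θ η A₁ A₂ a₁ a₂]
  · intro h hrank
    have h0 : TPi (annotV τ) ℵ₀ ((n : ℕ) : Ordinal.{0}) φ := tpi_univ n h
    have hrank0 : rank.{0} φ ≤ (m : Cardinal.{0}) := (rank_le_nat_univ φ m).mp hrank
    have hd : CnfOf.{0} (fun _ ψ => TPi τ ℵ₀ ((n : ℕ) : Ordinal.{0}) ψ) φ (g0 r₁ r₂) :=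
      (main_decomp φ _ (g0 r₁ r₂)).2 h0
    obtain ⟨J, θ, η, hf, hc, hs⟩ := hd
    haveI := hf
    refine ⟨⟨J, θ, η, PropForm.iAnd J (fun j => (PropForm.var (j, 0)).or (PropForm.var (j, 1)))⟩,
      ?_, ?_, hf, ?_, ?_⟩
    · exact fun j => ⟨tpi_univ n (hc j).1,
        (rank_le_nat_univ (θ j) m).mp (le_trans (hc j).2.2.1 hrank0)⟩
    · exact fun j => ⟨tpi_univ n (hc j).2.1,
        (rank_le_nat_univ (η j) m).mp (le_trans (hc j).2.2.2 hrank0)⟩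
    · exact .iAnd J hf _ fun j => finitary_or _ _ (.var _) (.var _)
    · intro A₁ A₂ a₁ a₂
      erw [← mix_g0 a₁ a₂, hs A₁ A₂ a₁ a₂, redseq_of_cnf J θ η A₁ A₂ a₁ a₂]

end FV
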